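/- Let f : ℝ → ℝ be C^n on [a',b] with a', b integers, a' < b, n ≥ 2, p ≥ 0, and suppose [a',b] can be divided into l subintervals on each of which f^{(n-1)} is monotone. Let M_max and M_min be the maximum and minimum of f^{(n-1)} on [a',b]. Then |R_{np}| ≤ T_{n,p} · l · (M_max - M_min), where R_{np} = (-1)^n ∫_{a'}^b ∑_{|k|>p} e^{2πikx}/(2πik)^n f^{(n)}(x) dx and T_{n,p} = (2/(2π)^n)(ζ(n) - ∑_{k=1}^p k^{-n}). -/

import Mathlib

open Real intervalIntegral

/-- `∑_{|k|>p} e^{2πikx}/(2πik)^n`. -/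
noncomputable def cTail (n p : ℕ) (x : ℝ) : ℂ :=
  ∑' k : {k : ℤ // p < k.natAbs},
    Complex.exp (2 * Real.pi * Complex.I * ((k : ℤ) : ℂ) * x) /
      (2 * Real.pi * Complex.I * ((k : ℤ) : ℂ)) ^ n

/-- `T_{n,p} = (2/(2π)^n) (ζ(n) - ∑_{k=1}^p k^{-n})` with `ζ(n) = ∑_{k≥1} k^{-n}`. -/
noncomputable def Tnp (n p : ℕ) : ℝ :=
  2 / (2 * Real.pi) ^ n *
    ((∑' k : ℕ, 1 / ((k : ℝ) + 1) ^ n) - ∑ k ∈ Finset.Icc 1 p, 1 / (k : ℝ) ^ n)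

private lemma mono_nonneg_deriv {g : ℝ → ℝ} {u v x c : ℝ}
    (hm : MonotoneOn g (Set.Icc u v)) (hx : x ∈ Set.Ioo u v) (hd : HasDerivAt g c x) :
    0 ≤ c := by
  have h1 : Filter.Tendsto (slope g x) (nhdsWithin x (Set.Ioi x)) (nhds c) :=
    (hasDerivAt_iff_tendsto_slope.mp hd).mono_left
      (nhdsWithin_mono _ fun y hy => ne_of_gt hy)
  refine ge_of_tendsto h1 ?_
  filter_upwards [Ioo_mem_nhdsGT_of_mem ⟨le_refl x, hx.2⟩] with y hy
  rw [slope_def_field]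
  apply div_nonneg _ (by linarith [hy.1])
  have := hm (Set.mem_Icc.mpr ⟨hx.1.le, hx.2.le⟩)
    (Set.mem_Icc.mpr ⟨(hx.1.trans hy.1).le, hy.2.le⟩) hy.1.le
  linarith

private noncomputable def tailBound (n : ℕ) (k : ℤ) : ℝ :=
  1 / ((2 * Real.pi) ^ n * ((k.natAbs : ℝ)) ^ n)

private lemma norm_term_eq (n : ℕ) (k : ℤ) (x : ℝ) :
    ‖Complex.exp (2 * Real.pi * Complex.I * (k : ℂ) * x) /
      (2 * Real.pi * Complex.I * (k : ℂ)) ^ n‖ = tailBound n k := by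
  have hre : (2 * (Real.pi : ℂ) * Complex.I * (k : ℂ) * (x : ℂ)).re = 0 := by
    simp [Complex.mul_re, Complex.mul_im]
  rw [norm_div, norm_pow, Complex.norm_exp, hre,
    Real.exp_zero]
  have habs : ‖(2 * (Real.pi : ℂ) * Complex.I * (k : ℂ))‖
      = 2 * Real.pi * (k.natAbs : ℝ) := by
    rw [norm_mul, norm_mul, norm_mul, Complex.norm_two, Complex.norm_real, Complex.norm_I,
      Complex.norm_intCast, Real.norm_eq_abs, abs_of_pos Real.pi_pos]
    rw [show |(k : ℝ)| = ((k.natAbs : ℝ)) by rw [Nat.cast_natAbs, Int.cast_abs]]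
    ring
  rw [habs, tailBound,
    show (2 * Real.pi * (k.natAbs : ℝ)) = (2 * Real.pi) * (k.natAbs : ℝ) by ring, mul_pow]

private lemma tail_hasSum (n p : ℕ) (hn : 2 ≤ n) :
    Summable (fun k : {k : ℤ // p < k.natAbs} => tailBound n (k : ℤ)) ∧
    ∑' k : {k : ℤ // p < k.natAbs}, tailBound n (k : ℤ) = Tnp n p := by
  classical
  set c : ℝ := 1 / (2 * Real.pi) ^ n with hc
  set F : ℕ → ℝ := fun m => c * (1 / (m : ℝ) ^ n) with hF
  have hns : Summable (fun m : ℕ => 1 / (m : ℝ) ^ n) :=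
    Real.summable_one_div_nat_pow.mpr (by omega)
  have hFs : Summable F := hns.mul_left c
  set S : Set ℤ := {k : ℤ | p < k.natAbs} with hS
  set Sc : Set ℕ := {m : ℕ | p < m} with hSc
  set Fn : ℕ → ℝ := Sc.indicator F with hFn
  have hFns : Summable Fn := hFs.indicator Sc
  set Fz : ℤ → ℝ := S.indicator (tailBound n) with hFz
  have hval : ∀ m : ℕ, tailBound n (m : ℤ) = F m := by
    intro m
    rw [tailBound, hF]
    simp only [Int.natAbs_natCast]
    rw [hc, ← one_div_mul_one_div]
  have h1 : ∀ m : ℕ, Fz (m : ℤ) = Fn m := by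
    intro m
    by_cases hm : p < m
    · rw [hFz, hFn, Set.indicator_of_mem (by simpa [hS] using hm),
        Set.indicator_of_mem (by simpa [hSc] using hm)]
      exact hval m
    · rw [hFz, hFn, Set.indicator_of_notMem (by simpa [hS] using hm),
        Set.indicator_of_notMem (by simpa [hSc] using hm)]
  have h2 : ∀ m : ℕ, Fz (-(m : ℤ)) = Fn m := by
    intro m
    by_cases hm : p < m
    · rw [hFz, hFn, Set.indicator_of_mem (by simpa [hS] using hm),
        Set.indicator_of_mem (by simpa [hSc] using hm),
        show tailBound n (-(m : ℤ)) = tailBound n (m : ℤ) by simp [tailBound]]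
      exact hval m
    · rw [hFz, hFn, Set.indicator_of_notMem (by simpa [hS] using hm),
        Set.indicator_of_notMem (by simpa [hSc] using hm)]
  have hFz0 : Fz 0 = 0 := by
    rw [hFz, Set.indicator_apply_eq_zero]
    intro h
    simp [hS] at h
  set σ : ℝ := ∑' m, Fn m with hσ
  have hA : HasSum (fun m : ℕ => Fz (m : ℤ)) σ := by
    have e : (fun m : ℕ => Fz (m : ℤ)) = Fn := funext h1
    rw [e, hσ]; exact hFns.hasSum
  have hB : HasSum (fun m : ℕ => Fz (-(m : ℤ))) σ := by
    have e : (fun m : ℕ => Fz (-(m : ℤ))) = Fn := funext h2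
    rw [e, hσ]; exact hFns.hasSum
  have hzsum : HasSum Fz (σ + σ - Fz 0) := HasSum.of_nat_of_neg hA hB
  rw [hFz0, sub_zero] at hzsum
  have hsub : Summable (fun k : {k : ℤ // p < k.natAbs} => tailBound n (k : ℤ)) := by
    have h := hzsum.summable.subtype S
    refine h.congr fun k => ?_
    exact Set.indicator_of_mem (s := S) (f := tailBound n) k.2
  have htv : (∑' k : {k : ℤ // p < k.natAbs}, tailBound n (k : ℤ)) = σ + σ := by
    have e1 : (∑' k : S, tailBound n (k : ℤ)) = ∑' k, Fz k := tsum_subtype S (tailBound n)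
    calc (∑' k : {k : ℤ // p < k.natAbs}, tailBound n (k : ℤ))
        = ∑' k : S, tailBound n (k : ℤ) := rfl
      _ = ∑' k, Fz k := e1
      _ = σ + σ := hzsum.tsum_eq
  -- compute σ
  have hcompl : Sc = (↑(Finset.range (p + 1)) : Set ℕ)ᶜ := by
    ext m
    simp [hSc, Set.mem_compl_iff, Finset.mem_range, not_lt, Nat.succ_le_iff]
  have e2 : σ = ∑' m : ((↑(Finset.range (p + 1)) : Set ℕ)ᶜ : Set ℕ), F m := by
    rw [hσ, hFn, ← tsum_subtype Sc F, hcompl]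
  have e3 := Summable.sum_add_tsum_compl (s := Finset.range (p + 1)) hFs
  have e5 : (∑' m : ℕ, 1 / (m : ℝ) ^ n) = ∑' k : ℕ, 1 / ((k : ℝ) + 1) ^ n := by
    rw [Summable.tsum_eq_zero_add hns]
    push_cast
    rw [zero_pow (by omega : n ≠ 0), div_zero, zero_add]
  have e4 : (∑' m, F m) = c * ∑' k : ℕ, 1 / ((k : ℝ) + 1) ^ n := by
    rw [hF, tsum_mul_left, e5]
  have e6 : (∑ m ∈ Finset.range (p + 1), F m) = c * ∑ k ∈ Finset.Icc 1 p, 1 / (k : ℝ) ^ n := by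
    rw [show Finset.range (p + 1) = insert 0 (Finset.Icc 1 p) from by ext m; simp; omega]
    rw [Finset.sum_insert (by simp), Finset.mul_sum]
    simp [hF, zero_pow (by omega : n ≠ 0)]
  have hσval : σ = c * ((∑' k : ℕ, 1 / ((k : ℝ) + 1) ^ n)
      - ∑ k ∈ Finset.Icc 1 p, 1 / (k : ℝ) ^ n) := by
    have := e3
    rw [e6, e4] at this
    rw [e2]
    linarith [this]
  refine ⟨hsub, ?_⟩
  rw [htv, hσval, Tnp, hc]
  ring

private lemma norm_cTail_le (n p : ℕ) (hn : 2 ≤ n) (x : ℝ) : ‖cTail n p x‖ ≤ Tnp n p := by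
  obtain ⟨hsum, htsum⟩ := tail_hasSum n p hn
  rw [cTail]
  have hnorms : Summable (fun k : {k : ℤ // p < k.natAbs} =>
      ‖Complex.exp (2 * Real.pi * Complex.I * ((k : ℤ) : ℂ) * x) /
        (2 * Real.pi * Complex.I * ((k : ℤ) : ℂ)) ^ n‖) :=
    hsum.congr fun k => (norm_term_eq n (k : ℤ) x).symm
  refine le_trans (norm_tsum_le_tsum_norm hnorms) (le_of_eq ?_)
  rw [← htsum]
  exact tsum_congr fun k => norm_term_eq n (k : ℤ) x

private lemma cTail_continuous (n p : ℕ) (hn : 2 ≤ n) : Continuous (cTail n p) := by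
  obtain ⟨hsum, -⟩ := tail_hasSum n p hn
  refine continuous_tsum (fun k => ?_) hsum (fun k x => (norm_term_eq n (k : ℤ) x).le)
  exact (Complex.continuous_exp.comp (continuous_const.mul Complex.continuous_ofReal)).div_const _

open MeasureTheory

/-- if `[a',b]` is divided into `l` subintervals on each of which
`f^{(n-1)}` is monotone, then `|R_{np}| ≤ T_{n,p} · l · (M_max − M_min)`, where
`M_max`, `M_min` are the max and min of `f^{(n-1)}` on `[a',b]`. -/
theorem memf_remainder_estimate_monotone_pieces (f : ℝ → ℝ) (a' b : ℤ) (hab : a' < b)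
    (n : ℕ) (hn : 2 ≤ n) (p : ℕ) (l : ℕ) (hl : 0 < l)
    (hf : ContDiffOn ℝ n f (Set.Icc (a' : ℝ) (b : ℝ)))
    (t : ℕ → ℝ) (ht0 : t 0 = (a' : ℝ)) (htl : t l = (b : ℝ))
    (htmono : ∀ i < l, t i < t (i + 1))
    (hpieces : ∀ i < l,
      MonotoneOn (iteratedDerivWithin (n - 1) f (Set.Icc (a' : ℝ) (b : ℝ)))
          (Set.Icc (t i) (t (i + 1))) ∨
        AntitoneOn (iteratedDerivWithin (n - 1) f (Set.Icc (a' : ℝ) (b : ℝ)))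
          (Set.Icc (t i) (t (i + 1)))) :
    ‖(-1 : ℂ) ^ n * ∫ x in (a' : ℝ)..(b : ℝ),
        cTail n p x *
          Complex.ofReal (iteratedDerivWithin n f (Set.Icc (a' : ℝ) (b : ℝ)) x)‖ ≤
      Tnp n p * l *
        (sSup (iteratedDerivWithin (n - 1) f (Set.Icc (a' : ℝ) (b : ℝ)) ''
            Set.Icc (a' : ℝ) (b : ℝ)) -
          sInf (iteratedDerivWithin (n - 1) f (Set.Icc (a' : ℝ) (b : ℝ)) ''
            Set.Icc (a' : ℝ) (b : ℝ))) := by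
  have hAB : (a' : ℝ) < (b : ℝ) := by exact_mod_cast hab
  set A : ℝ := (a' : ℝ) with hA
  set B : ℝ := (b : ℝ) with hB
  set s : Set ℝ := Set.Icc A B with hs
  have hud : UniqueDiffOn ℝ s := uniqueDiffOn_Icc hAB
  set g : ℝ → ℝ := iteratedDerivWithin (n - 1) f s with hg
  set G : ℝ → ℝ := iteratedDerivWithin n f s with hG
  have hGcont : ContinuousOn G s := hf.continuousOn_iteratedDerivWithin le_rfl hud
  have hgcont : ContinuousOn g s :=
    hf.continuousOn_iteratedDerivWithin (by exact_mod_cast Nat.sub_le n 1) hud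
  have hgdiff : DifferentiableOn ℝ g s :=
    hf.differentiableOn_iteratedDerivWithin (by exact_mod_cast (by omega : n - 1 < n)) hud
  have hderiv : ∀ x ∈ Set.Ioo A B, HasDerivAt g (G x) x := by
    intro x hx
    have hxs : x ∈ s := Set.mem_Icc.mpr ⟨hx.1.le, hx.2.le⟩
    have h2 : G x = derivWithin g s x := by
      rw [hG, show n = (n - 1) + 1 by omega, iteratedDerivWithin_succ]
    rw [h2]
    exact ((hgdiff x hxs).hasDerivWithinAt).hasDerivAt (Icc_mem_nhds hx.1 hx.2)
  have hmono_t : ∀ j, j ≤ l → ∀ i, i ≤ j → t i ≤ t j := by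
    intro j
    induction j with
    | zero => intro _ i hi; rw [Nat.le_zero.mp hi]
    | succ j ih =>
      intro hj i hi
      rcases Nat.eq_or_lt_of_le hi with h | h
      · rw [h]
      · exact (ih (by omega) i (by omega)).trans (htmono j (by omega)).le
  have ht_mem : ∀ i, i ≤ l → t i ∈ s := by
    intro i hi
    have h1 : t 0 ≤ t i := hmono_t i hi 0 (Nat.zero_le _)
    have h2 : t i ≤ t l := hmono_t l le_rfl i hi
    rw [ht0] at h1; rw [htl] at h2
    exact ⟨h1, h2⟩
  have hcomp : IsCompact (g '' s) := isCompact_Icc.image_of_continuousOn hgcont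
  set M : ℝ := sSup (g '' s) - sInf (g '' s) with hM
  have hMB : ∀ x ∈ s, ∀ y ∈ s, g x - g y ≤ M := fun x hx y hy =>
    sub_le_sub (le_csSup hcomp.bddAbove ⟨x, hx, rfl⟩) (csInf_le hcomp.bddBelow ⟨y, hy, rfl⟩)
  have hGint : ∀ i, i < l → IntervalIntegrable G volume (t i) (t (i + 1)) := by
    intro i hi
    apply ContinuousOn.intervalIntegrable_of_Icc (htmono i hi).le
    exact hGcont.mono (Set.Icc_subset_Icc (ht_mem i (by omega)).1 (ht_mem (i + 1) (by omega)).2)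
  have hGabsint : ∀ i, i < l → IntervalIntegrable (fun x => |G x|) volume (t i) (t (i + 1)) :=
    fun i hi => (hGint i hi).abs
  have hpiece : ∀ i, i < l → (∫ x in t i..t (i + 1), |G x|) ≤ M := by
    intro i hi
    have hle := (htmono i hi).le
    have hsub : Set.Icc (t i) (t (i + 1)) ⊆ s :=
      Set.Icc_subset_Icc (ht_mem i (by omega)).1 (ht_mem (i + 1) (by omega)).2
    have hIooSub : Set.Ioo (t i) (t (i + 1)) ⊆ Set.Ioo A B :=
      Set.Ioo_subset_Ioo (ht_mem i (by omega)).1 (ht_mem (i + 1) (by omega)).2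
    have hftc : (∫ x in t i..t (i + 1), G x) = g (t (i + 1)) - g (t i) :=
      intervalIntegral.integral_eq_sub_of_hasDeriv_right_of_le hle (hgcont.mono hsub)
        (fun x hx => ((hderiv x (hIooSub hx)).hasDerivWithinAt)) (hGint i hi)
    rcases hpieces i hi with hmon | hanti
    · have hpos : ∀ x ∈ Set.Ioo (t i) (t (i + 1)), 0 ≤ G x := fun x hx =>
        mono_nonneg_deriv hmon hx (hderiv x (hIooSub hx))
      have heq : (∫ x in t i..t (i + 1), |G x|) = ∫ x in t i..t (i + 1), G x := by
        apply intervalIntegral.integral_congr_ae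
        filter_upwards [Filter.eventuallyEq_set.mp
          (Ioo_ae_eq_Ioc (μ := volume) (a := t i) (b := t (i + 1)))] with x hx hmem
        rw [Set.uIoc_of_le hle] at hmem
        exact abs_of_nonneg (hpos x (hx.mpr hmem))
      rw [heq, hftc]
      exact hMB _ (ht_mem (i + 1) (by omega)) _ (ht_mem i (by omega))
    · have hmon' : MonotoneOn (fun y => -(g y)) (Set.Icc (t i) (t (i + 1))) :=
        fun x hx y hy hxy => neg_le_neg (hanti hx hy hxy)
      have hpos : ∀ x ∈ Set.Ioo (t i) (t (i + 1)), 0 ≤ -G x := fun x hx =>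
        mono_nonneg_deriv hmon' hx ((hderiv x (hIooSub hx)).neg)
      have heq : (∫ x in t i..t (i + 1), |G x|) = ∫ x in t i..t (i + 1), -G x := by
        apply intervalIntegral.integral_congr_ae
        filter_upwards [Filter.eventuallyEq_set.mp
          (Ioo_ae_eq_Ioc (μ := volume) (a := t i) (b := t (i + 1)))] with x hx hmem
        rw [Set.uIoc_of_le hle] at hmem
        have := hpos x (hx.mpr hmem)
        rw [abs_of_nonpos (by linarith)]
      rw [heq, intervalIntegral.integral_neg, hftc, neg_sub]
      exact hMB _ (ht_mem i (by omega)) _ (ht_mem (i + 1) (by omega))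
  have hsum : (∫ x in A..B, |G x|) ≤ (l : ℝ) * M := by
    have h1 := intervalIntegral.sum_integral_adjacent_intervals
      (a := t) (n := l) (μ := volume) (f := fun x => |G x|) (fun k hk => hGabsint k hk)
    rw [ht0, htl] at h1
    rw [← h1]
    calc (∑ i ∈ Finset.range l, ∫ x in t i..t (i + 1), |G x|)
        ≤ ∑ _i ∈ Finset.range l, M :=
          Finset.sum_le_sum fun i hi => hpiece i (Finset.mem_range.mp hi)
      _ = (l : ℝ) * M := by simp [Finset.sum_const, nsmul_eq_mul]
  have hTnp : ∀ x, ‖cTail n p x‖ ≤ Tnp n p := fun x => norm_cTail_le n p hn x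
  have hT0 : 0 ≤ Tnp n p := le_trans (norm_nonneg _) (hTnp 0)
  have hprod_cont : ContinuousOn (fun x => cTail n p x * (G x : ℂ)) s :=
    (cTail_continuous n p hn).continuousOn.mul (Complex.continuous_ofReal.comp_continuousOn hGcont)
  have hint1 : IntervalIntegrable (fun x => cTail n p x * (G x : ℂ)) volume A B :=
    hprod_cont.intervalIntegrable_of_Icc hAB.le
  have hint2 : IntervalIntegrable (fun x => Tnp n p * |G x|) volume A B :=
    (continuousOn_const.mul hGcont.abs).intervalIntegrable_of_Icc hAB.le
  calc ‖(-1 : ℂ) ^ n * ∫ x in A..B, cTail n p x * (G x : ℂ)‖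
      = ‖∫ x in A..B, cTail n p x * (G x : ℂ)‖ := by
        rw [norm_mul, norm_pow, norm_neg, norm_one, one_pow, one_mul]
    _ ≤ ∫ x in A..B, ‖cTail n p x * (G x : ℂ)‖ :=
        intervalIntegral.norm_integral_le_integral_norm hAB.le
    _ ≤ ∫ x in A..B, Tnp n p * |G x| := by
        apply intervalIntegral.integral_mono_on hAB.le hint1.norm hint2
        intro x _
        rw [norm_mul, Complex.norm_real, Real.norm_eq_abs]
        exact mul_le_mul_of_nonneg_right (hTnp x) (abs_nonneg _)
    _ = Tnp n p * ∫ x in A..B, |G x| := intervalIntegral.integral_const_mul _ _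
    _ ≤ Tnp n p * ((l : ℝ) * M) := mul_le_mul_of_nonneg_left hsum hT0
    _ = Tnp n p * l * M := by ring
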